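/- Let Γ = ℤ[i] and L = Γ ∪ (1/2 + Γ) be the 1×2 rectangular lattice viewed as a point packing. If R is a similarity isometry of L with scaling factor β > 0 (i.e., βRL ⊆ L with finite index), then βRΓ ⊆ Γ, i.e., the index n = [βRΓ : (Γ ∩ βRΓ)] equals 1. -/

import Mathlib

/-- For the 1×2 rectangular lattice L = ℤ[i] ∪ (1/2 + ℤ[i]) viewed as a point packing:
if βRL ⊆ L for a linear isometry R and β > 0, then βRΓ ⊆ Γ (i.e. n = 1). -/
theorem stmt14
    (G : Set ℂ) (hG : G = {z : ℂ | ∃ a b : ℤ, z = (a : ℂ) + (b : ℂ) * Complex.I})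
    (L : Set ℂ) (hL : L = G ∪ ((fun γ => (1 / 2 : ℂ) + γ) '' G))
    (R : ℂ ≃ₗᵢ[ℝ] ℂ) (β : ℝ) (hβ : 0 < β)
    (hsub : ∀ z ∈ L, β • R z ∈ L) :
    ∀ z ∈ G, β • R z ∈ G := by
  subst hG hL
  -- forward characterization of membership in L
  have hLmem : ∀ z : ℂ, z ∈ ({z : ℂ | ∃ a b : ℤ, z = (a:ℂ) + (b:ℂ) * Complex.I} ∪
      ((fun γ => (1/2 : ℂ) + γ) '' {z : ℂ | ∃ a b : ℤ, z = (a:ℂ) + (b:ℂ) * Complex.I})) →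
      ∃ a b : ℤ, z.re = (a : ℝ)/2 ∧ z.im = (b : ℝ) := by
    rintro z (⟨a, b, rfl⟩ | ⟨y, ⟨a, b, rfl⟩, rfl⟩)
    · exact ⟨2*a, b, by push_cast; simp, by simp⟩
    · exact ⟨2*a+1, b, by push_cast; simp; ring, by simp⟩
  set p := (R 1).re with hp
  set q := (R 1).im with hq
  set r := (R Complex.I).re with hr
  set s := (R Complex.I).im with hs
  -- norm facts
  have hnorm : ∀ x : ℂ, (R x).re^2 + (R x).im^2 = x.re^2 + x.im^2 := by
    intro x
    have h := R.norm_map x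
    have h2 : Complex.normSq (R x) = Complex.normSq x := by
      rw [← Complex.sq_norm, ← Complex.sq_norm, h]
    simpa [Complex.normSq_apply, sq] using h2
  have hn1 : p^2 + q^2 = 1 := by simpa using hnorm 1
  have hn2 : r^2 + s^2 = 1 := by simpa using hnorm Complex.I
  have hn3 : (p + r)^2 + (q + s)^2 = 2 := by
    have := hnorm (1 + Complex.I)
    simp only [map_add, Complex.add_re, Complex.add_im, Complex.one_re, Complex.one_im,
      Complex.I_re, Complex.I_im] at this
    rw [← hp, ← hq, ← hr, ← hs] at this
    nlinarith [this]
  have horth : p * r + q * s = 0 := by nlinarith [hn1, hn2, hn3]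
  -- βR(1/2) ∈ L gives β*p ∈ ℤ, β*q ∈ 2ℤ
  have hhalf : (1/2 : ℂ) ∈ ({z : ℂ | ∃ a b : ℤ, z = (a:ℂ) + (b:ℂ) * Complex.I} ∪
      ((fun γ => (1/2 : ℂ) + γ) '' {z : ℂ | ∃ a b : ℤ, z = (a:ℂ) + (b:ℂ) * Complex.I})) := by
    right
    exact ⟨0, ⟨0, 0, by simp⟩, by simp⟩
  obtain ⟨c, d, hc, hd⟩ := hLmem _ (hsub _ hhalf)
  have hRhalf : β • R (1/2 : ℂ) = (1/2 : ℝ) • (β • R 1) := by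
    have h12 : (1/2 : ℂ) = (1/2 : ℝ) • (1 : ℂ) := by norm_num [Complex.real_smul]
    rw [h12, map_smul, smul_comm]
  rw [hRhalf] at hc hd
  have hre : ((1/2 : ℝ) • (β • R 1)).re = (1/2) * (β * p) := by
    simp [Complex.smul_re, hp]
  have him : ((1/2 : ℝ) • (β • R 1)).im = (1/2) * (β * q) := by
    simp [Complex.smul_im, hq]
  rw [hre] at hc
  rw [him] at hd
  have hbp : β * p = (c : ℝ) := by linarith
  have hbq : β * q = 2 * (d : ℝ) := by linarith
  -- orthogonality: (r, s) = e • (-q, p) with e = ±1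
  have hre2 : r = -(s * p - r * q) * q := by linear_combination p * horth - r * hn1
  have hse2 : s = (s * p - r * q) * p := by linear_combination q * horth - s * hn1
  have he : s * p - r * q = 1 ∨ s * p - r * q = -1 := by
    have key : (s * p - r * q) * (s * p - r * q) = 1 := by
      linear_combination (r^2 + s^2) * hn1 + hn2 - (p*r + q*s) * horth
    exact mul_self_eq_one_iff.mp key
  -- main computation
  intro z hz
  obtain ⟨a, b, rfl⟩ := hz
  have hRz : β • R ((a:ℂ) + (b:ℂ)*Complex.I) = (a:ℝ) • (β • R 1) + (b:ℝ) • (β • R Complex.I) := by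
    have h1 : ((a:ℂ) + (b:ℂ)*Complex.I) = (a:ℝ) • (1:ℂ) + (b:ℝ) • Complex.I := by
      simp [Complex.real_smul]
    rw [h1, map_add, map_smul, map_smul, smul_add, smul_comm β, smul_comm β]
  have hzre : (β • R ((a:ℂ) + (b:ℂ)*Complex.I)).re = (a:ℝ) * (β * p) + (b:ℝ) * (β * r) := by
    rw [hRz]; simp [Complex.smul_re, Complex.add_re, hp, hr]
  have hzim : (β • R ((a:ℂ) + (b:ℂ)*Complex.I)).im = (a:ℝ) * (β * q) + (b:ℝ) * (β * s) := by
    rw [hRz]; simp [Complex.smul_im, Complex.add_im, hq, hs]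
  rcases he with he1 | he1
  · refine ⟨a*c - 2*b*d, 2*a*d + b*c, ?_⟩
    rw [Complex.ext_iff]
    constructor
    · rw [hzre]
      have hbr : β * r = -(2 * (d : ℝ)) := by
        rw [hre2, he1]; linear_combination -hbq
      simp [Complex.add_re, Complex.mul_re]
      push_cast
      rw [hbp, hbr]; ring
    · rw [hzim]
      have hbs : β * s = (c : ℝ) := by
        rw [hse2, he1]; linear_combination hbp
      simp [Complex.add_im, Complex.mul_im]
      push_cast
      rw [hbq, hbs]; ring
  · refine ⟨a*c + 2*b*d, 2*a*d - b*c, ?_⟩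
    rw [Complex.ext_iff]
    constructor
    · rw [hzre]
      have hbr : β * r = 2 * (d : ℝ) := by
        rw [hre2, he1]; linear_combination hbq
      simp [Complex.add_re, Complex.mul_re]
      push_cast
      rw [hbp, hbr]; ring
    · rw [hzim]
      have hbs : β * s = -(c : ℝ) := by
        rw [hse2, he1]; linear_combination -hbp
      simp [Complex.add_im, Complex.mul_im]
      push_cast
      rw [hbq, hbs]; ring
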